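/- In the canonical model structure on the category of small groupoids, given a commutative square with left leg K : A ⟶ D an equivalence of categories that is injective on objects (trivial cofibration) and right leg G : B ⟶ C an isofibration, there exists a diagonal functor L : D ⟶ B making both triangles commute strictly. -/

import Mathlib

open CategoryTheory

/-- A functor between groupoids is an isofibration (fibration of groupoids) if every
arrow into an object of the form `G b` lifts to an arrow into `b`. -/
def IsGrpdFibration {B C : Type*} [Groupoid B] [Groupoid C] (G : B ⥤ C) : Prop :=
  ∀ (b : B) (c : C) (γ : c ⟶ G.obj b),
    ∃ (b' : B) (β : b' ⟶ b) (h : G.obj b' = c), G.map β = eqToHom h ≫ γ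

section Aux

variable {A B C D : Type*} [Groupoid A] [Groupoid B] [Groupoid C] [Groupoid D]
  (F : A ⥤ B) (K : A ⥤ D) (H : D ⥤ C) (G : B ⥤ C)

/-- Data of a lift at a single object `d`. -/
structure LiftData (hsq : F ⋙ G = K ⋙ H) (d : D) where
  a : A
  b : B
  φ : K.obj a ⟶ d
  β : b ⟶ F.obj a
  hb : G.obj b = H.obj d
  hβ : G.map β = eqToHom hb ≫ H.map (inv φ) ≫ eqToHom (Functor.congr_obj hsq a).symm

noncomputable def mkData (hsq : F ⋙ G = K ⋙ H) (hKes : K.EssSurj)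
    (hG : IsGrpdFibration G) (d : D) : LiftData F K H G hsq d :=
  letI := Classical.propDecidable (∃ a, K.obj a = d)
  if h : ∃ a, K.obj a = d then
    { a := h.choose
      b := F.obj h.choose
      φ := eqToHom h.choose_spec
      β := 𝟙 _
      hb := (Functor.congr_obj hsq h.choose).trans (congrArg H.obj h.choose_spec)
      hβ := by
        simp [eqToHom_map] }
  else
    letI := hKes
    letI s := hG (F.obj (K.objPreimage d)) (H.obj d)
      (H.map (K.objObjPreimageIso d).inv ≫
        eqToHom (Functor.congr_obj hsq (K.objPreimage d)).symm)
    { a := K.objPreimage d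
      b := s.choose
      φ := (K.objObjPreimageIso d).hom
      β := s.choose_spec.choose
      hb := s.choose_spec.choose_spec.choose
      hβ := by
        refine s.choose_spec.choose_spec.choose_spec.trans ?_
        simp }

lemma mkData_image (hsq : F ⋙ G = K ⋙ H) (hKes : K.EssSurj)
    (hG : IsGrpdFibration G) (hKinj : Function.Injective K.obj) (a : A) :
    ∃ (ha : (mkData F K H G hsq hKes hG (K.obj a)).a = a)
      (hbb : (mkData F K H G hsq hKes hG (K.obj a)).b = F.obj a),
      (mkData F K H G hsq hKes hG (K.obj a)).β =
        eqToHom (hbb.trans (congrArg F.obj ha.symm)) ∧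
      (mkData F K H G hsq hKes hG (K.obj a)).φ = eqToHom (congrArg K.obj ha) := by
  have h : ∃ a', K.obj a' = K.obj a := ⟨a, rfl⟩
  have ha : h.choose = a := hKinj h.choose_spec
  have hd : mkData F K H G hsq hKes hG (K.obj a) =
      { a := h.choose
        b := F.obj h.choose
        φ := eqToHom h.choose_spec
        β := 𝟙 _
        hb := (Functor.congr_obj hsq h.choose).trans (congrArg H.obj h.choose_spec)
        hβ := by simp [eqToHom_map] } := by
    simp only [mkData]
    rw [dif_pos h]
  rw [hd]
  exact ⟨ha, congrArg F.obj ha, by simp, by simp⟩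

noncomputable def liftFunctor (hsq : F ⋙ G = K ⋙ H) (hKff : K.FullyFaithful)
    (hKes : K.EssSurj) (hG : IsGrpdFibration G) : D ⥤ B where
  obj d := (mkData F K H G hsq hKes hG d).b
  map {d d'} f :=
    (mkData F K H G hsq hKes hG d).β ≫
      F.map (hKff.preimage ((mkData F K H G hsq hKes hG d).φ ≫ f ≫
        inv (mkData F K H G hsq hKes hG d').φ)) ≫
      inv (mkData F K H G hsq hKes hG d').β
  map_id d := by
    have : (mkData F K H G hsq hKes hG d).φ ≫ 𝟙 d ≫
        inv (mkData F K H G hsq hKes hG d).φ = K.map (𝟙 _) := by simp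
    rw [this, hKff.preimage_map]
    simp
  map_comp {d d' d''} f g := by
    have heq : (mkData F K H G hsq hKes hG d).φ ≫ (f ≫ g) ≫
          inv (mkData F K H G hsq hKes hG d'').φ =
        ((mkData F K H G hsq hKes hG d).φ ≫ f ≫ inv (mkData F K H G hsq hKes hG d').φ) ≫
        ((mkData F K H G hsq hKes hG d').φ ≫ g ≫ inv (mkData F K H G hsq hKes hG d'').φ) := by
      simp
    have hpre : ∀ {x y z : A} (u : K.obj x ⟶ K.obj y) (v : K.obj y ⟶ K.obj z),
        hKff.preimage (u ≫ v) = hKff.preimage u ≫ hKff.preimage v := by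
      intro x y z u v
      apply hKff.map_injective
      simp
    rw [heq, hpre]
    simp

end Aux

theorem stmt_14 {A B C D : Type*} [Groupoid A] [Groupoid B] [Groupoid C] [Groupoid D]
    (F : A ⥤ B) (K : A ⥤ D) (H : D ⥤ C) (G : B ⥤ C)
    (hsq : F ⋙ G = K ⋙ H)
    (hKff : K.FullyFaithful) (hKes : K.EssSurj) (hKinj : Function.Injective K.obj)
    (hG : IsGrpdFibration G) :
    ∃ L : D ⥤ B, K ⋙ L = F ∧ L ⋙ G = H := by
  refine ⟨liftFunctor F K H G hsq hKff hKes hG, ?_, ?_⟩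
  · refine CategoryTheory.Functor.ext (fun a => ?_) (fun a a' f => ?_)
    · obtain ⟨ha, hbb, _⟩ := mkData_image F K H G hsq hKes hG hKinj a
      exact hbb
    ·
      obtain ⟨ha, hbb, hβ, hφ⟩ := mkData_image F K H G hsq hKes hG hKinj a
      obtain ⟨ha', hbb', hβ', hφ'⟩ := mkData_image F K H G hsq hKes hG hKinj a'
      have hp : hKff.preimage ((mkData F K H G hsq hKes hG (K.obj a)).φ ≫ K.map f ≫
          inv (mkData F K H G hsq hKes hG (K.obj a')).φ) =
          eqToHom ha ≫ f ≫ eqToHom ha'.symm := by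
        apply hKff.map_injective
        simp [hφ, hφ', eqToHom_map]
      simp only [liftFunctor, Functor.comp_map, hp, hβ, hβ']
      simp [eqToHom_map]
  · refine CategoryTheory.Functor.ext (fun d => (mkData F K H G hsq hKes hG d).hb)
      (fun d d' f => ?_)
    ·
      have hcg := Functor.congr_hom hsq
        (hKff.preimage ((mkData F K H G hsq hKes hG d).φ ≫ f ≫
          inv (mkData F K H G hsq hKes hG d').φ))
      simp only [Functor.comp_map, hKff.map_preimage] at hcg
      simp only [liftFunctor, Functor.comp_map, Functor.map_comp, Functor.map_inv,
        (mkData F K H G hsq hKes hG d).hβ, (mkData F K H G hsq hKes hG d').hβ, hcg]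
      simp [eqToHom_map]
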